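/- Let ψ : ℝ × (0,∞)² → ℝ be defined by ψ(η₁,η₂,η₃) = ½η₁² + ¼(η₂ ln η₂ + η₃ ln η₃). Then: (a) the matrix of second partial derivatives of ψ at η is diag(1, 1/(4η₂), 1/(4η₃)), and for all x ∈ ℝ, y, z > 0, with J = diag(1, 2y, 2z) the Jacobian of (x,y,z) ↦ (x, y², z²), one has Jᵀ · Hess ψ(x, y², z²) · J equal to the 3×3 identity matrix; (b) ∇ψ(η) = (η₁, ¼ ln η₂ + ¼, ¼ ln η₃ + ¼) and ⟨∇ψ(η), η⟩ − ψ(η) = ½η₁² + ¼(η₂ + η₃). (This is the Smorodinski–Winternitz system (IIb), whose Hessian structure is not self-dual.) -/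

import Mathlib

open Real Set Matrix

/-- The Hessian potential of the Smorodinski–Winternitz system (IIb)
in its Hessian coordinates. -/
noncomputable def ψ (a b c : ℝ) : ℝ := a ^ 2 / 2 + (b * log b + c * log c) / 4

/-- Partial derivative with respect to the first variable. -/
noncomputable def d1 (f : ℝ → ℝ → ℝ → ℝ) (a b c : ℝ) : ℝ := deriv (fun s => f s b c) a

/-- Partial derivative with respect to the second variable. -/
noncomputable def d2 (f : ℝ → ℝ → ℝ → ℝ) (a b c : ℝ) : ℝ := deriv (fun s => f a s c) b

/-- Partial derivative with respect to the third variable. -/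
noncomputable def d3 (f : ℝ → ℝ → ℝ → ℝ) (a b c : ℝ) : ℝ := deriv (fun s => f a b s) c

/-- The matrix of second partial derivatives of a function of three variables. -/
noncomputable def Hess (f : ℝ → ℝ → ℝ → ℝ) (a b c : ℝ) : Matrix (Fin 3) (Fin 3) ℝ :=
  !![d1 (d1 f) a b c, d1 (d2 f) a b c, d1 (d3 f) a b c;
     d2 (d1 f) a b c, d2 (d2 f) a b c, d2 (d3 f) a b c;
     d3 (d1 f) a b c, d3 (d2 f) a b c, d3 (d3 f) a b c]

/-- The Jacobian matrix of the coordinate change `(x,y,z) ↦ (x, y², z²)`. -/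
noncomputable def J (y z : ℝ) : Matrix (Fin 3) (Fin 3) ℝ :=
  !![1, 0, 0; 0, 2 * y, 0; 0, 0, 2 * z]

lemma d1_psi (a b c : ℝ) : d1 ψ a b c = a := by
  have h : HasDerivAt (fun s : ℝ => s ^ 2 / 2 + (b * log b + c * log c) / 4) a a := by
    simpa using ((hasDerivAt_pow 2 a).div_const 2).add_const ((b * log b + c * log c) / 4)
  exact h.deriv

lemma d2_psi (a b c : ℝ) (hb : b ≠ 0) : d2 ψ a b c = (log b + 1) / 4 := by
  have h : HasDerivAt (fun s : ℝ => a ^ 2 / 2 + (s * log s + c * log c) / 4)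
      ((log b + 1) / 4) b := by
    simpa using (((Real.hasDerivAt_mul_log hb).add_const (c * log c)).div_const 4).const_add
      (a ^ 2 / 2)
  exact h.deriv

lemma d3_psi (a b c : ℝ) (hc : c ≠ 0) : d3 ψ a b c = (log c + 1) / 4 := by
  have h : HasDerivAt (fun s : ℝ => a ^ 2 / 2 + (b * log b + s * log s) / 4)
      ((log c + 1) / 4) c := by
    simpa using (((Real.hasDerivAt_mul_log hc).const_add (b * log b)).div_const 4).const_add
      (a ^ 2 / 2)
  exact h.deriv

lemma d1d1 (a b c : ℝ) : d1 (d1 ψ) a b c = 1 := by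
  have : (fun s : ℝ => d1 ψ s b c) = fun s => s := by
    funext s; exact d1_psi s b c
  show deriv _ _ = _; rw [this]; simp

lemma d2d1 (a b c : ℝ) : d2 (d1 ψ) a b c = 0 := by
  have : (fun s : ℝ => d1 ψ a s c) = fun _ => a := by
    funext s; exact d1_psi a s c
  show deriv _ _ = _; rw [this]; simp

lemma d3d1 (a b c : ℝ) : d3 (d1 ψ) a b c = 0 := by
  have : (fun s : ℝ => d1 ψ a b s) = fun _ => a := by
    funext s; exact d1_psi a b s
  show deriv _ _ = _; rw [this]; simp

lemma d1d2 (a b c : ℝ) (hb : 0 < b) : d1 (d2 ψ) a b c = 0 := by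
  have : (fun s : ℝ => d2 ψ s b c) = fun _ => (log b + 1) / 4 := by
    funext s; exact d2_psi s b c hb.ne'
  show deriv _ _ = _; rw [this]; simp

lemma d3d2 (a b c : ℝ) (hb : 0 < b) : d3 (d2 ψ) a b c = 0 := by
  have : (fun s : ℝ => d2 ψ a b s) = fun _ => (log b + 1) / 4 := by
    funext s; exact d2_psi a b s hb.ne'
  show deriv _ _ = _; rw [this]; simp

lemma d2d2 (a b c : ℝ) (hb : 0 < b) : d2 (d2 ψ) a b c = 1 / (4 * b) := by
  have hev : (fun s : ℝ => d2 ψ a s c) =ᶠ[nhds b] fun s => (log s + 1) / 4 :=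
    Filter.eventually_of_mem (Ioi_mem_nhds hb) fun s hs => d2_psi a s c (ne_of_gt hs)
  have h : HasDerivAt (fun s : ℝ => (log s + 1) / 4) (1 / (4 * b)) b := by
    have := ((Real.hasDerivAt_log hb.ne').add_const 1).div_const 4
    refine this.congr_deriv ?_
    ring
  show deriv _ _ = _
  rw [hev.deriv_eq, h.deriv]

lemma d1d3 (a b c : ℝ) (hc : 0 < c) : d1 (d3 ψ) a b c = 0 := by
  have : (fun s : ℝ => d3 ψ s b c) = fun _ => (log c + 1) / 4 := by
    funext s; exact d3_psi s b c hc.ne'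
  show deriv _ _ = _; rw [this]; simp

lemma d2d3 (a b c : ℝ) (hc : 0 < c) : d2 (d3 ψ) a b c = 0 := by
  have : (fun s : ℝ => d3 ψ a s c) = fun _ => (log c + 1) / 4 := by
    funext s; exact d3_psi a s c hc.ne'
  show deriv _ _ = _; rw [this]; simp

lemma d3d3 (a b c : ℝ) (hc : 0 < c) : d3 (d3 ψ) a b c = 1 / (4 * c) := by
  have hev : (fun s : ℝ => d3 ψ a b s) =ᶠ[nhds c] fun s => (log s + 1) / 4 :=
    Filter.eventually_of_mem (Ioi_mem_nhds hc) fun s hs => d3_psi a b s (ne_of_gt hs)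
  have h : HasDerivAt (fun s : ℝ => (log s + 1) / 4) (1 / (4 * c)) c := by
    have := ((Real.hasDerivAt_log hc.ne').add_const 1).div_const 4
    refine this.congr_deriv ?_
    ring
  show deriv _ _ = _
  rw [hev.deriv_eq, h.deriv]

lemma hess_psi (a b c : ℝ) (hb : 0 < b) (hc : 0 < c) :
    Hess ψ a b c = !![1, 0, 0; 0, 1 / (4 * b), 0; 0, 0, 1 / (4 * c)] := by
  unfold Hess
  rw [d1d1 a b c, d2d1 a b c, d3d1 a b c, d1d2 a b c hb, d2d2 a b c hb, d3d2 a b c hb,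
    d1d3 a b c hc, d2d3 a b c hc, d3d3 a b c hc]

/-- Smorodinski–Winternitz system (IIb), `ψ(η) = ½η₁² + ¼(η₂ ln η₂ + η₃ ln η₃)`:
(a) `Hess ψ(η) = diag(1, 1/(4η₂), 1/(4η₃))` and `(x, y², z²)` are Hessian
coordinates for Euclidean 3-space (`Jᵀ · Hess ψ(x,y²,z²) · J = I₃`);
(b) the dual Hessian coordinates are
`∇ψ(η) = (η₁, ¼ ln η₂ + ¼, ¼ ln η₃ + ¼)` and the dual Hessian potential is
`⟨∇ψ(η), η⟩ − ψ(η) = ½η₁² + ¼(η₂ + η₃)`. -/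
theorem sw_IIb_hessian_and_dual :
    (∀ a b c : ℝ, 0 < b → 0 < c →
      Hess ψ a b c = !![1, 0, 0; 0, 1 / (4 * b), 0; 0, 0, 1 / (4 * c)]) ∧
    (∀ x y z : ℝ, 0 < y → 0 < z →
      (J y z)ᵀ * Hess ψ x (y ^ 2) (z ^ 2) * J y z = 1) ∧
    ∀ a b c : ℝ, 0 < b → 0 < c →
      d1 ψ a b c = a ∧
      d2 ψ a b c = (1 / 4) * log b + 1 / 4 ∧
      d3 ψ a b c = (1 / 4) * log c + 1 / 4 ∧
      d1 ψ a b c * a + d2 ψ a b c * b + d3 ψ a b c * c - ψ a b c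
        = a ^ 2 / 2 + (b + c) / 4 := by
  refine ⟨fun a b c hb hc => hess_psi a b c hb hc, ?_, ?_⟩
  · intro x y z hy hz
    rw [hess_psi x (y ^ 2) (z ^ 2) (by positivity) (by positivity)]
    unfold _root_.J
    ext i j
    fin_cases i <;> fin_cases j <;>
      simp [Matrix.mul_apply, Fin.sum_univ_succ, Matrix.one_apply] <;>
      field_simp <;> ring
  · intro a b c hb hc
    rw [d1_psi a b c, d2_psi a b c hb.ne', d3_psi a b c hc.ne']
    refine ⟨rfl, by ring, by ring, ?_⟩
    unfold ψ
    ring
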